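/- Let G be a D-regular Bonnet-Myers sharp graph of diameter L with pole x_0. For any x_1 ∈ S_1(x_0) and x_2 ∈ S_2(x_0) with x_1 ~ x_2, there exists a unique vertex x̄_1 ∈ S_1(x_0) such that x̄_1 ~ x_2 and x̄_1 is neither equal nor adjacent to x_1. In other words, the interval [x_0, x_2] induces a cocktail party graph. -/

import Mathlib

open Finset

namespace BMS

open scoped Classical

set_option linter.unusedSectionVars false
set_option maxHeartbeats 1000000

variable {V : Type*}

/-- The uniform probability measure on the closed 1-ball of `x` in a `D`-regular graph. -/
noncomputable def mu (G : SimpleGraph V) (D : ℕ) (x : V) : V → ℝ :=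
  fun v => if G.dist x v ≤ 1 then 1 / (D + 1) else 0

/-- The L¹-Wasserstein distance between `μ_x` and `μ_y`, as an infimum over transport plans. -/
noncomputable def W1 (G : SimpleGraph V) [Fintype V] (D : ℕ) (x y : V) : ℝ :=
  sInf { c : ℝ | ∃ π : V → V → ℝ,
    (∀ u v, 0 ≤ π u v) ∧
    (∀ u, ∑ v, π u v = mu G D x u) ∧
    (∀ v, ∑ u, π u v = mu G D y v) ∧
    c = ∑ u, ∑ v, (G.dist u v : ℝ) * π u v }

/-- Ollivier Ricci curvature (Lin–Lu–Yau normalization for regular graphs). -/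
noncomputable def kappa (G : SimpleGraph V) [Fintype V] (D : ℕ) (x y : V) : ℝ :=
  ((D + 1) / D) * (1 - W1 G D x y)

/-- `G` is Bonnet–Myers sharp: the infimum of the curvature over edges equals `2 / L`. -/
def BMSharp (G : SimpleGraph V) [Fintype V] (D L : ℕ) : Prop :=
  sInf { k : ℝ | ∃ x y, G.Adj x y ∧ k = kappa G D x y } = 2 / (L : ℝ)

/-- Number of neighbors of `y` at distance `k` from `x0`. -/
noncomputable def sphDeg (G : SimpleGraph V) [Fintype V] (x0 y : V) (k : ℕ) : ℕ :=
  (Finset.univ.filter (fun v => G.Adj y v ∧ G.dist x0 v = k)).card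

/-- Number of triangles containing the edge `x ~ y` (common neighbors of `x` and `y`). -/
noncomputable def tri (G : SimpleGraph V) [Fintype V] (x y : V) : ℕ :=
  (Finset.univ.filter (fun v => G.Adj x v ∧ G.Adj y v)).card

/-- A good optimal transport map from `B_1(a)` to `B_1(b)`: a bijection between the 1-balls,
fixing exactly the vertices of `B_1(a) ∩ B_1(b)` (among the domain), whose cost realizes
the Wasserstein distance `W1 (μ_a, μ_b)`. -/
def goodMap (G : SimpleGraph V) [Fintype V] (D : ℕ) (a b : V) (T : V → V) : Prop :=
  Set.BijOn T {v | G.dist a v ≤ 1} {v | G.dist b v ≤ 1} ∧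
  (∀ v, G.dist a v ≤ 1 → (T v = v ↔ G.dist b v ≤ 1)) ∧
  (1 / (D + 1 : ℝ)) *
      ∑ v ∈ Finset.univ.filter (fun v => G.dist a v ≤ 1), (G.dist v (T v) : ℝ) =
    W1 G D a b

section Aux
variable [Fintype V] {G : SimpleGraph V} {D : ℕ}

def IsPlan (G : SimpleGraph V) [Fintype V] (D : ℕ) (x y : V) (π : V → V → ℝ) : Prop :=
  (∀ u v, 0 ≤ π u v) ∧
    (∀ u, ∑ v, π u v = mu G D x u) ∧
    (∀ v, ∑ u, π u v = mu G D y v)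



variable [Fintype V] {G : SimpleGraph V} {D : ℕ}

/-- The transport plans between `μ_x` and `μ_y`. -/
lemma mu_nonneg (G : SimpleGraph V) (D : ℕ) (x v : V) : 0 ≤ mu G D x v := by
  unfold mu; positivity

lemma mu_eq_of_le (x v : V) (h : G.dist x v ≤ 1) : mu G D x v = 1 / (D + 1) := by
  simp [mu, h]

lemma mu_eq_zero (x v : V) (h : ¬ G.dist x v ≤ 1) : mu G D x v = 0 := by
  simp [mu, h]

/-- the closed 1-ball as a finset -/
noncomputable def ball (G : SimpleGraph V) [Fintype V] (y : V) : Finset V :=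
  univ.filter (fun v => G.dist y v ≤ 1)

lemma mem_ball {y v : V} : v ∈ ball G y ↔ G.dist y v ≤ 1 := by
  simp [ball]

lemma ball_eq (hconn : G.Connected) (y : V) :
    ball G y = insert y (G.neighborFinset y) := by
  ext v
  simp only [ball, mem_filter, mem_univ, true_and, mem_insert, SimpleGraph.mem_neighborFinset]
  constructor
  · intro h
    rcases Nat.le_one_iff_eq_zero_or_eq_one.mp h with h' | h'
    · exact Or.inl ((hconn.dist_eq_zero_iff).mp h').symm
    · exact Or.inr ((SimpleGraph.dist_eq_one_iff_adj).mp h')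
  · rintro (rfl | hadj)
    · simp [SimpleGraph.dist_self]
    · exact le_of_eq ((SimpleGraph.dist_eq_one_iff_adj).mpr hadj)

lemma card_ball (hconn : G.Connected) (hreg : G.IsRegularOfDegree D) (y : V) :
    (ball G y).card = D + 1 := by
  rw [ball_eq hconn y, card_insert_of_notMem (by simp), SimpleGraph.card_neighborFinset_eq_degree,
    hreg y]

lemma sum_mu (hconn : G.Connected) (hreg : G.IsRegularOfDegree D) (y : V) :
    ∑ v, mu G D y v = 1 := by
  have : ∑ v, mu G D y v = ∑ v ∈ ball G y, (1 / (D + 1) : ℝ) := by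
    rw [ball, Finset.sum_filter]
    exact Finset.sum_congr rfl (fun v _ => by by_cases h : G.dist y v ≤ 1 <;> simp [mu, h])
  rw [this, Finset.sum_const, card_ball hconn hreg y]
  have : ((D : ℝ) + 1) ≠ 0 := by positivity
  rw [nsmul_eq_mul, Nat.cast_add, Nat.cast_one]
  field_simp

/-- the set of costs of transport plans -/
def costSet (G : SimpleGraph V) [Fintype V] (D : ℕ) (x y : V) : Set ℝ :=
  { c : ℝ | ∃ π : V → V → ℝ,
    (∀ u v, 0 ≤ π u v) ∧
    (∀ u, ∑ v, π u v = mu G D x u) ∧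
    (∀ v, ∑ u, π u v = mu G D y v) ∧
    c = ∑ u, ∑ v, (G.dist u v : ℝ) * π u v }

lemma W1_eq_csInf (x y : V) : W1 G D x y = sInf (costSet G D x y) := rfl

lemma costSet_nonempty (hconn : G.Connected) (hreg : G.IsRegularOfDegree D) (x y : V) :
    (costSet G D x y).Nonempty := by
  refine ⟨_, fun u v => mu G D x u * mu G D y v, fun u v => mul_nonneg (mu_nonneg _ _ _ _) (mu_nonneg _ _ _ _), ?_, ?_, rfl⟩
  · intro u; rw [← Finset.mul_sum, sum_mu hconn hreg, mul_one]
  · intro v; rw [← Finset.sum_mul, sum_mu hconn hreg, one_mul]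

lemma costSet_bddBelow (x y : V) : BddBelow (costSet G D x y) := by
  refine ⟨0, ?_⟩
  rintro c ⟨π, hpos, -, -, rfl⟩
  exact Finset.sum_nonneg fun u _ => Finset.sum_nonneg fun v _ =>
    mul_nonneg (by positivity) (hpos u v)

lemma W1_le_cost {x y : V} {π : V → V → ℝ} (h : IsPlan G D x y π) :
    W1 G D x y ≤ ∑ u, ∑ v, (G.dist u v : ℝ) * π u v :=
  csInf_le (costSet_bddBelow x y) ⟨π, h.1, h.2.1, h.2.2, rfl⟩

/-- weak duality against a 1-Lipschitz potential -/
lemma le_W1 (hconn : G.Connected) (hreg : G.IsRegularOfDegree D) {x y : V}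
    (φ : V → ℝ) (hφ : ∀ u v, φ v - φ u ≤ (G.dist u v : ℝ)) :
    (∑ v, φ v * mu G D y v) - (∑ u, φ u * mu G D x u) ≤ W1 G D x y := by
  refine le_csInf (costSet_nonempty hconn hreg x y) ?_
  rintro c ⟨π, hpos, hrow, hcol, rfl⟩
  have key : ∑ u, ∑ v, (φ v - φ u) * π u v ≤ ∑ u, ∑ v, (G.dist u v : ℝ) * π u v :=
    Finset.sum_le_sum fun u _ => Finset.sum_le_sum fun v _ =>
      mul_le_mul_of_nonneg_right (hφ u v) (hpos u v)
  have expand : ∑ u, ∑ v, (φ v - φ u) * π u v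
      = (∑ v, φ v * mu G D y v) - (∑ u, φ u * mu G D x u) := by
    have h1 : ∑ u, ∑ v, φ v * π u v = ∑ v, φ v * mu G D y v := by
      rw [Finset.sum_comm]
      exact Finset.sum_congr rfl fun v _ => by rw [← Finset.mul_sum, hcol v, mul_comm]
    have h2 : ∑ u, ∑ v, φ u * π u v = ∑ u, φ u * mu G D x u := by
      exact Finset.sum_congr rfl fun u _ => by rw [← Finset.mul_sum, hrow u]
    calc ∑ u, ∑ v, (φ v - φ u) * π u v
        = ∑ u, (∑ v, φ v * π u v - ∑ v, φ u * π u v) := by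
          exact Finset.sum_congr rfl fun u _ => by
            rw [← Finset.sum_sub_distrib]
            exact Finset.sum_congr rfl fun v _ => by ring
      _ = ∑ u, ∑ v, φ v * π u v - ∑ u, ∑ v, φ u * π u v := Finset.sum_sub_distrib _ _
      _ = _ := by rw [h1, h2]
  linarith [key, le_of_eq expand.symm]

/-- gluing: triangle inequality for W1 -/
lemma W1_triangle (hconn : G.Connected) (hreg : G.IsRegularOfDegree D) (x m y : V) :
    W1 G D x y ≤ W1 G D x m + W1 G D m y := by
  refine le_of_forall_pos_le_add ?_
  intro ε hε
  obtain ⟨c1, hc1mem, hc1⟩ := Real.lt_sInf_add_pos (costSet_nonempty hconn hreg x m) (half_pos hε)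
  obtain ⟨c2, hc2mem, hc2⟩ := Real.lt_sInf_add_pos (costSet_nonempty hconn hreg m y) (half_pos hε)
  obtain ⟨π1, h1pos, h1row, h1col, rfl⟩ := hc1mem
  obtain ⟨π2, h2pos, h2row, h2col, rfl⟩ := hc2mem
  set t : V → V → V → ℝ := fun u v w =>
    (if mu G D m v = 0 then 0 else π1 u v * π2 v w / mu G D m v) with ht
  have htpos : ∀ u v w, 0 ≤ t u v w := by
    intro u v w
    simp only [ht]
    split
    · exact le_refl 0
    · exact div_nonneg (mul_nonneg (h1pos u v) (h2pos v w)) (mu_nonneg G D m v)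
  have hz1 : ∀ u v, mu G D m v = 0 → π1 u v = 0 := by
    intro u v hv
    have hsum : ∑ u', π1 u' v = 0 := by rw [h1col v, hv]
    exact (Finset.sum_eq_zero_iff_of_nonneg (fun u' _ => h1pos u' v)).mp hsum u (mem_univ u)
  have ht1 : ∀ u v, ∑ w, t u v w = π1 u v := by
    intro u v
    simp only [ht]
    by_cases hv : mu G D m v = 0
    · simp [hv, hz1 u v hv]
    · rw [Finset.sum_congr rfl (fun w _ => by rw [if_neg hv])]
      rw [← Finset.sum_div, ← Finset.mul_sum, h2row v, mul_div_assoc, div_self hv, mul_one]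
  have ht2 : ∀ v w, ∑ u, t u v w = π2 v w := by
    intro v w
    simp only [ht]
    by_cases hv : mu G D m v = 0
    · have : π2 v w = 0 := by
        have hsum : ∑ w', π2 v w' = 0 := by rw [h2row v, hv]
        exact (Finset.sum_eq_zero_iff_of_nonneg (fun w' _ => h2pos v w')).mp hsum w (mem_univ w)
      simp [hv, this]
    · rw [Finset.sum_congr rfl (fun u _ => by rw [if_neg hv])]
      rw [← Finset.sum_div, ← Finset.sum_mul, h1col v, mul_comm, mul_div_assoc, div_self hv,
        mul_one]
  set σ : V → V → ℝ := fun u w => ∑ v, t u v w with hσ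
  have hplan : IsPlan G D x y σ := by
    refine ⟨fun u w => Finset.sum_nonneg fun v _ => htpos u v w, ?_, ?_⟩
    · intro u
      rw [hσ]
      simp only
      rw [Finset.sum_comm]
      rw [Finset.sum_congr rfl (fun v _ => ht1 u v), h1row u]
    · intro w
      rw [hσ]
      simp only
      rw [Finset.sum_comm]
      rw [Finset.sum_congr rfl (fun v _ => ht2 v w), h2col w]
  have hcost : ∑ u, ∑ w, (G.dist u w : ℝ) * σ u w ≤
      (∑ u, ∑ v, (G.dist u v : ℝ) * π1 u v) + (∑ v, ∑ w, (G.dist v w : ℝ) * π2 v w) := by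
    have step1 : ∑ u, ∑ w, (G.dist u w : ℝ) * σ u w
        = ∑ u, ∑ w, ∑ v, (G.dist u w : ℝ) * t u v w := by
      exact Finset.sum_congr rfl fun u _ => Finset.sum_congr rfl fun w _ => Finset.mul_sum _ _ _
    have step2 : ∑ u, ∑ w, ∑ v, (G.dist u w : ℝ) * t u v w
        ≤ ∑ u, ∑ w, ∑ v, ((G.dist u v : ℝ) + (G.dist v w : ℝ)) * t u v w := by
      refine Finset.sum_le_sum fun u _ => Finset.sum_le_sum fun w _ =>
        Finset.sum_le_sum fun v _ => mul_le_mul_of_nonneg_right ?_ (htpos u v w)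
      have h3 : G.dist u w ≤ G.dist u v + G.dist v w := hconn.dist_triangle
      exact_mod_cast h3
    have step3 : ∑ u, ∑ w, ∑ v, ((G.dist u v : ℝ) + (G.dist v w : ℝ)) * t u v w
        = (∑ u, ∑ w, ∑ v, (G.dist u v : ℝ) * t u v w)
          + (∑ u, ∑ w, ∑ v, (G.dist v w : ℝ) * t u v w) := by
      rw [← Finset.sum_add_distrib]
      refine Finset.sum_congr rfl fun u _ => ?_
      rw [← Finset.sum_add_distrib]
      refine Finset.sum_congr rfl fun w _ => ?_
      rw [← Finset.sum_add_distrib]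
      exact Finset.sum_congr rfl fun v _ => by ring
    have step4 : ∑ u, ∑ w, ∑ v, (G.dist u v : ℝ) * t u v w
        = ∑ u, ∑ v, (G.dist u v : ℝ) * π1 u v := by
      refine Finset.sum_congr rfl fun u _ => ?_
      rw [Finset.sum_comm]
      exact Finset.sum_congr rfl fun v _ => by rw [← Finset.mul_sum, ht1 u v]
    have step5 : ∑ u, ∑ w, ∑ v, (G.dist v w : ℝ) * t u v w
        = ∑ v, ∑ w, (G.dist v w : ℝ) * π2 v w := by
      calc ∑ u, ∑ w, ∑ v, (G.dist v w : ℝ) * t u v w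
          = ∑ w, ∑ u, ∑ v, (G.dist v w : ℝ) * t u v w := Finset.sum_comm
        _ = ∑ w, ∑ v, ∑ u, (G.dist v w : ℝ) * t u v w :=
            Finset.sum_congr rfl fun w _ => Finset.sum_comm
        _ = ∑ w, ∑ v, (G.dist v w : ℝ) * π2 v w :=
            Finset.sum_congr rfl fun w _ => Finset.sum_congr rfl fun v _ => by
              rw [← Finset.mul_sum, ht2 v w]
        _ = ∑ v, ∑ w, (G.dist v w : ℝ) * π2 v w := Finset.sum_comm
    rw [step1]
    refine le_trans step2 (le_of_eq ?_)
    rw [step3, step4, step5]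
  have := W1_le_cost hplan
  have hW1 : W1 G D x m = sInf (costSet G D x m) := rfl
  have hW2 : W1 G D m y = sInf (costSet G D m y) := rfl
  rw [hW1, hW2]
  calc W1 G D x y ≤ ∑ u, ∑ w, (G.dist u w : ℝ) * σ u w := this
    _ ≤ _ + _ := hcost
    _ ≤ sInf (costSet G D x m) + ε / 2 + (sInf (costSet G D m y) + ε / 2) := by
        linarith [hc1.le, hc2.le]
    _ = sInf (costSet G D x m) + sInf (costSet G D m y) + ε := by ring


/-- sum of a potential against `mu` -/
lemma sum_mul_mu (y : V) (φ : V → ℝ) :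
    ∑ v, φ v * mu G D y v = (∑ v ∈ ball G y, φ v) / (D + 1) := by
  rw [ball, Finset.sum_filter, Finset.sum_div]
  refine Finset.sum_congr rfl fun v _ => ?_
  by_cases h : G.dist y v ≤ 1 <;> simp [mu, h] <;> ring

/-- weak duality, ball form -/
lemma le_W1' (hconn : G.Connected) (hreg : G.IsRegularOfDegree D) {x y : V}
    (φ : V → ℝ) (hφ : ∀ u v, φ v - φ u ≤ (G.dist u v : ℝ)) :
    ((∑ v ∈ ball G y, φ v) - (∑ v ∈ ball G x, φ v)) / (D + 1) ≤ W1 G D x y := by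
  have h := le_W1 hconn hreg (x := x) (y := y) φ hφ
  rw [sum_mul_mu, sum_mul_mu] at h
  rw [sub_div]
  exact h

lemma dist_cast_triangle (hconn : G.Connected) (u v w : V) :
    (G.dist u w : ℝ) ≤ (G.dist u v : ℝ) + (G.dist v w : ℝ) := by
  have h : G.dist u w ≤ G.dist u v + G.dist v w := hconn.dist_triangle
  exact_mod_cast h

/-- the distance-to-a-vertex potential is 1-Lipschitz -/
lemma lips_dist_right (hconn : G.Connected) (z : V) :
    ∀ u v : V, (G.dist z v : ℝ) - (G.dist z u : ℝ) ≤ (G.dist u v : ℝ) := by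
  intro u v
  have := dist_cast_triangle (G := G) hconn z u v
  linarith

lemma lips_dist_left (hconn : G.Connected) (z : V) :
    ∀ u v : V, ((G.dist u z : ℝ) - (G.dist v z : ℝ) : ℝ) ≤ (G.dist u v : ℝ) := by
  intro u v
  have := dist_cast_triangle (G := G) hconn u v z
  linarith

lemma lips_neg_dist_left (hconn : G.Connected) (z : V) :
    ∀ u v : V, (-(G.dist v z : ℝ)) - (-(G.dist u z : ℝ)) ≤ (G.dist u v : ℝ) := by
  intro u v
  have := dist_cast_triangle (G := G) hconn u v z
  linarith

/-- The per-edge transport bound. -/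
noncomputable def lamR (D L : ℕ) : ℝ := 1 - 2 * D / ((D + 1) * L)

/-- curvature bound on each edge gives transport bound -/
lemma W1_le_lam {L : ℕ} (hBM : BMSharp G D L) (hD : 0 < D) (hL : 0 < L)
    {y z : V} (hyz : G.Adj y z) :
    W1 G D y z ≤ lamR D L := by
  classical
  unfold lamR
  set S := { k : ℝ | ∃ x y, G.Adj x y ∧ k = kappa G D x y } with hS
  have hfin : S.Finite := by
    refine Set.Finite.subset (Set.finite_range (fun q : V × V => kappa G D q.1 q.2)) ?_
    rintro k ⟨a, b, -, rfl⟩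
    exact ⟨(a, b), rfl⟩
  have hbdd : BddBelow S := hfin.bddBelow
  have hmem : kappa G D y z ∈ S := ⟨y, z, hyz, rfl⟩
  have hle : sInf S ≤ kappa G D y z := csInf_le hbdd hmem
  rw [hBM] at hle
  unfold kappa at hle
  have hD' : (0:ℝ) < D := by exact_mod_cast hD
  have hL' : (0:ℝ) < L := by exact_mod_cast hL
  have hD1 : (0:ℝ) < (D:ℝ) + 1 := by linarith
  rw [div_le_iff₀ hL'] at hle
  have h2 : 2 * (D:ℝ) ≤ (D + 1) * (1 - W1 G D y z) * L := by
    have := mul_le_mul_of_nonneg_right hle hD'.le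
    calc 2 * (D:ℝ) ≤ ((D:ℝ) + 1) / D * (1 - W1 G D y z) * L * D := this
      _ = (D + 1) * (1 - W1 G D y z) * L * (D / D) := by ring
      _ = (D + 1) * (1 - W1 G D y z) * L := by rw [div_self hD'.ne', mul_one]
  have hpos : (0:ℝ) < ((D:ℝ) + 1) * L := by positivity
  rw [le_sub_iff_add_le, ← le_sub_iff_add_le', div_le_iff₀ hpos]
  nlinarith [h2]

/-- plan for identity -/
lemma W1_self_le (hconn : G.Connected) (hreg : G.IsRegularOfDegree D) (y : V) :
    W1 G D y y ≤ 0 := by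
  classical
  have hplan : IsPlan G D y y (fun u v => if u = v then mu G D y u else 0) := by
    refine ⟨fun u v => by dsimp only; split <;> simp [mu_nonneg], fun u => by simp, fun v => by simp⟩
  have := W1_le_cost hplan
  refine le_trans this (le_of_eq ?_)
  refine Finset.sum_eq_zero fun u _ => Finset.sum_eq_zero fun v _ => ?_
  by_cases h : u = v
  · subst h; simp [SimpleGraph.dist_self]
  · simp [h]

/-- transport bound along paths -/
lemma W1_le_dist_mul {L : ℕ} (hconn : G.Connected) (hreg : G.IsRegularOfDegree D)
    (hBM : BMSharp G D L) (hD : 0 < D) (hL : 0 < L) (y z : V) :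
    W1 G D y z ≤ (G.dist y z : ℝ) * lamR D L := by
  classical
  suffices H : ∀ (n : ℕ) (y z : V), G.dist y z = n →
      W1 G D y z ≤ (n : ℝ) * lamR D L by
    exact H (G.dist y z) y z rfl |>.trans (le_of_eq (by norm_num))
  intro n
  induction n with
  | zero =>
    intro y z h
    have : y = z := (hconn.dist_eq_zero_iff).mp h
    subst this
    simpa using W1_self_le hconn hreg y
  | succ n ih =>
    intro y z h
    obtain ⟨p, hp⟩ := (hconn.preconnected y z).exists_walk_length_eq_dist
    rw [h] at hp
    cases p with
    | nil => simp at hp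
    | cons hadj q =>
      rename_i m
      have hqlen : q.length = n := by simpa using hp
      have hdmz : G.dist m z = n := by
        have h1 : G.dist m z ≤ n := hqlen ▸ SimpleGraph.dist_le q
        have h2 : G.dist y z ≤ G.dist y m + G.dist m z := hconn.dist_triangle
        have h3 : G.dist y m ≤ 1 := by
          have : G.dist y m = 1 := SimpleGraph.dist_eq_one_iff_adj.mpr hadj
          omega
        omega
      calc W1 G D y z ≤ W1 G D y m + W1 G D m z := W1_triangle hconn hreg y m z
        _ ≤ lamR D L + (n : ℝ) * lamR D L :=
            add_le_add (W1_le_lam hBM hD hL hadj) (ih m z hdmz)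
        _ = ((n + 1 : ℕ) : ℝ) * lamR D L := by push_cast; ring


section Sphere

variable {L : ℕ} {x0 p : V}

lemma NlamR (hD : 0 < D) (hL : 0 < L) :
    ((D:ℝ) + 1) * lamR D L = (D + 1) - 2 * D / L := by
  have hD' : (0:ℝ) < D := by exact_mod_cast hD
  have hL' : (0:ℝ) < L := by exact_mod_cast hL
  unfold lamR
  field_simp

lemma Mp_p_eq (hconn : G.Connected) (hreg : G.IsRegularOfDegree D) (p : V) :
    ∑ v ∈ ball G p, (G.dist v p : ℝ) = D := by
  rw [ball_eq hconn p, Finset.sum_insert (by simp)]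
  have h1 : ∀ v ∈ G.neighborFinset p, (G.dist v p : ℝ) = 1 := by
    intro v hv
    rw [SimpleGraph.mem_neighborFinset] at hv
    have : G.dist v p = 1 := SimpleGraph.dist_eq_one_iff_adj.mpr hv.symm
    exact_mod_cast this
  rw [Finset.sum_congr rfl h1, Finset.sum_const, SimpleGraph.dist_self]
  simp [hreg p, SimpleGraph.card_neighborFinset_eq_degree]

lemma Mx_x0_eq (hconn : G.Connected) (hreg : G.IsRegularOfDegree D) (x0 : V) :
    ∑ v ∈ ball G x0, (G.dist x0 v : ℝ) = D := by
  rw [ball_eq hconn x0, Finset.sum_insert (by simp)]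
  have h1 : ∀ v ∈ G.neighborFinset x0, (G.dist x0 v : ℝ) = 1 := by
    intro v hv
    rw [SimpleGraph.mem_neighborFinset] at hv
    have : G.dist x0 v = 1 := SimpleGraph.dist_eq_one_iff_adj.mpr hv
    exact_mod_cast this
  rw [Finset.sum_congr rfl h1, Finset.sum_const, SimpleGraph.dist_self]
  simp [hreg x0, SimpleGraph.card_neighborFinset_eq_degree]

/-- duality specialized: distance-to-x0 potential. -/
lemma dual_dx (hconn : G.Connected) (hreg : G.IsRegularOfDegree D) (x0 y z : V) :
    ((∑ v ∈ ball G z, (G.dist x0 v : ℝ)) - ∑ v ∈ ball G y, (G.dist x0 v : ℝ)) / (D + 1)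
      ≤ W1 G D y z :=
  le_W1' hconn hreg _ (lips_dist_right hconn x0)

/-- duality specialized: negative distance-to-p potential. -/
lemma dual_dp (hconn : G.Connected) (hreg : G.IsRegularOfDegree D) (p y z : V) :
    ((∑ v ∈ ball G y, (G.dist v p : ℝ)) - ∑ v ∈ ball G z, (G.dist v p : ℝ)) / (D + 1)
      ≤ W1 G D y z := by
  have h := le_W1' hconn hreg (x := y) (y := z) (fun v => -(G.dist v p : ℝ))
    (lips_neg_dist_left hconn p)
  have e : ((∑ v ∈ ball G z, -(G.dist v p : ℝ)) - ∑ v ∈ ball G y, -(G.dist v p : ℝ))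
      = ((∑ v ∈ ball G y, (G.dist v p : ℝ)) - ∑ v ∈ ball G z, (G.dist v p : ℝ)) := by
    rw [Finset.sum_neg_distrib, Finset.sum_neg_distrib]
    ring
  rwa [e] at h

/-- Every vertex in the 1-sphere of the pole is at distance exactly `L-1` from `p`. -/
lemma sphere1_distp (hconn : G.Connected) (hreg : G.IsRegularOfDegree D)
    (hBM : BMSharp G D L) (hD : 0 < D) (hL : 0 < L) (hp : G.dist x0 p = L) :
    ∀ v, G.dist x0 v = 1 → (G.dist v p : ℝ) = (L : ℝ) - 1 := by
  have hL' : (0:ℝ) < L := by exact_mod_cast hL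
  have hD1 : (0:ℝ) < (D:ℝ) + 1 := by positivity
  -- upper bound on Mp x0
  have hup : W1 G D x0 p ≤ (L : ℝ) * lamR D L := by
    have := W1_le_dist_mul hconn hreg hBM hD hL x0 p
    rwa [hp] at this
  have hdual := dual_dp hconn hreg p x0 p
  rw [Mp_p_eq hconn hreg p] at hdual
  have hMp_le : ∑ v ∈ ball G x0, (G.dist v p : ℝ) ≤ (L:ℝ) * ((D:ℝ)+1) - D := by
    have h1 : ((∑ v ∈ ball G x0, (G.dist v p : ℝ)) - D) ≤ ((D:ℝ)+1) * ((L:ℝ) * lamR D L) := by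
      rw [div_le_iff₀ hD1] at hdual
      calc (∑ v ∈ ball G x0, (G.dist v p : ℝ)) - D ≤ W1 G D x0 p * ((D:ℝ)+1) := hdual
        _ ≤ ((L:ℝ) * lamR D L) * ((D:ℝ)+1) := by
            apply mul_le_mul_of_nonneg_right hup hD1.le
        _ = ((D:ℝ)+1) * ((L:ℝ) * lamR D L) := by ring
    have h2 : ((D:ℝ)+1) * ((L:ℝ) * lamR D L) = (L:ℝ) * (((D:ℝ)+1) - 2*D/L) := by
      rw [show ((D:ℝ)+1) * ((L:ℝ) * lamR D L) = (L:ℝ) * (((D:ℝ)+1) * lamR D L) by ring,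
        NlamR hD hL]
    have h3 : (L:ℝ) * (((D:ℝ)+1) - 2*D/L) = (L:ℝ)*((D:ℝ)+1) - 2*D := by
      field_simp
    linarith
  -- pointwise lower bound
  set g : V → ℝ := fun v => ((L:ℝ) - 1) + (if v = x0 then 1 else 0) with hg
  have hpw : ∀ v ∈ ball G x0, g v ≤ (G.dist v p : ℝ) := by
    intro v hv
    rw [mem_ball] at hv
    by_cases h : v = x0
    · subst h
      have hvp : (G.dist v p : ℝ) = L := by exact_mod_cast hp
      simp only [hg, if_pos rfl, hvp, ite_true]
      linarith
    · have htri : G.dist x0 p ≤ G.dist x0 v + G.dist v p := hconn.dist_triangle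
      have : (L:ℝ) ≤ (G.dist x0 v : ℝ) + (G.dist v p : ℝ) := by
        rw [← hp]; exact_mod_cast htri
      have hle : (G.dist x0 v : ℝ) ≤ 1 := by exact_mod_cast hv
      simp only [hg, if_neg h]
      linarith
  have hgsum : ∑ v ∈ ball G x0, g v = ((L:ℝ) - 1) * ((D:ℝ)+1) + 1 := by
    rw [hg]
    rw [Finset.sum_add_distrib, Finset.sum_const, Finset.sum_ite_eq' (ball G x0) x0 (fun _ => (1:ℝ))]
    rw [card_ball hconn hreg x0, if_pos (by rw [mem_ball, SimpleGraph.dist_self]; omega)]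
    push_cast
    ring
  -- gaps are zero
  have hgap : ∀ v ∈ ball G x0, (G.dist v p : ℝ) - g v = 0 := by
    have hsum : ∑ v ∈ ball G x0, ((G.dist v p : ℝ) - g v) ≤ 0 := by
      rw [Finset.sum_sub_distrib, hgsum]
      have : (L:ℝ) * ((D:ℝ)+1) - D - (((L:ℝ) - 1) * ((D:ℝ)+1) + 1) = 0 := by ring
      linarith
    have hnn : ∀ v ∈ ball G x0, 0 ≤ (G.dist v p : ℝ) - g v := fun v hv => by
      linarith [hpw v hv]
    have hzero : ∑ v ∈ ball G x0, ((G.dist v p : ℝ) - g v) = 0 :=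
      le_antisymm hsum (Finset.sum_nonneg hnn)
    exact fun v hv => (Finset.sum_eq_zero_iff_of_nonneg hnn).mp hzero v hv
  intro v hv
  have hvball : v ∈ ball G x0 := by rw [mem_ball]; omega
  have := hgap v hvball
  have hne : v ≠ x0 := by
    intro h; subst h; rw [SimpleGraph.dist_self] at hv; omega
  simp only [hg, if_neg hne] at this
  linarith

/-- Structure of vertices in the 1-sphere of a pole: the number of neighbours (in the closed
ball, including the vertex itself) at distance 1 from `x0` is exactly `2D/L - 1`, and all
neighbours at distance 2 from `x0` are at distance exactly `L-2` from `p`. -/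
lemma sphere1_struct (hconn : G.Connected) (hreg : G.IsRegularOfDegree D)
    (hBM : BMSharp G D L) (hD : 0 < D) (hL : 0 < L) (hp : G.dist x0 p = L)
    {x1 : V} (hx1 : G.dist x0 x1 = 1) :
    ((((ball G x1).filter (fun v => G.dist x0 v = 1)).card : ℝ) = 2 * D / L - 1) ∧
    (∑ v ∈ ball G x1, (G.dist x0 v : ℝ) = 2 * (D:ℝ) + 1 - 2 * D / L) ∧
    (∀ v, G.dist x1 v ≤ 1 → G.dist x0 v = 2 → (G.dist v p : ℝ) = (L : ℝ) - 2) := by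
  have hL' : (0:ℝ) < L := by exact_mod_cast hL
  have hD1 : (0:ℝ) < (D:ℝ) + 1 := by positivity
  have hadj01 : G.Adj x0 x1 := SimpleGraph.dist_eq_one_iff_adj.mp hx1
  set n1 : ℕ := ((ball G x1).filter (fun v => G.dist x0 v = 1)).card with hn1
  -- (1) the x0-distance weight of the ball of x1
  have hpw1 : ∀ v ∈ ball G x1, (G.dist x0 v : ℝ)
      = 2 - 2 * (if v = x0 then 1 else 0) - (if G.dist x0 v = 1 then 1 else 0) := by
    intro v hv
    rw [mem_ball] at hv
    have hle2 : G.dist x0 v ≤ 2 := by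
      have := hconn.dist_triangle (u := x0) (v := x1) (w := v)
      omega
    by_cases h0 : v = x0
    · subst h0
      simp [SimpleGraph.dist_self]
    · have hge1 : G.dist x0 v ≠ 0 := fun hd => h0 ((hconn.dist_eq_zero_iff).mp hd).symm
      by_cases h1 : G.dist x0 v = 1
      · rw [h1]; simp [h0]; norm_num
      · have : G.dist x0 v = 2 := by omega
        rw [this]; simp [h0, h1]
  have hMx1 : ∑ v ∈ ball G x1, (G.dist x0 v : ℝ) = 2 * ((D:ℝ)+1) - 2 - n1 := by
    rw [Finset.sum_congr rfl hpw1]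
    rw [Finset.sum_sub_distrib, Finset.sum_sub_distrib, Finset.sum_const, ← Finset.mul_sum,
      Finset.sum_ite_eq' (ball G x1) x0 (fun _ => (1:ℝ)), Finset.sum_boole]
    rw [if_pos (by rw [mem_ball, SimpleGraph.dist_comm]; omega), card_ball hconn hreg x1]
    push_cast
    ring
  -- (2) lower bound on n1
  have hn1_ge : 2 * (D:ℝ) / L - 1 ≤ (n1 : ℝ) := by
    have hdual := dual_dx hconn hreg x0 x0 x1
    rw [Mx_x0_eq hconn hreg x0, hMx1] at hdual
    have hup := W1_le_lam (G := G) hBM hD hL hadj01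
    have h1 : 2 * ((D:ℝ)+1) - 2 - n1 - D ≤ ((D:ℝ)+1) * lamR D L := by
      rw [div_le_iff₀ hD1] at hdual
      nlinarith [hdual, mul_le_mul_of_nonneg_right hup hD1.le]
    rw [NlamR hD hL] at h1
    linarith
  -- (3) upper bound on the p-distance weight of ball x1
  have hx1p : (G.dist x1 p : ℝ) = (L:ℝ) - 1 :=
    sphere1_distp hconn hreg hBM hD hL hp x1 hx1
  have hMp_le : ∑ v ∈ ball G x1, (G.dist v p : ℝ)
      ≤ (D:ℝ) + ((L:ℝ)-1) * (((D:ℝ)+1) - 2*D/L) := by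
    have hdual := dual_dp hconn hreg p x1 p
    rw [Mp_p_eq hconn hreg p] at hdual
    have hup : W1 G D x1 p ≤ ((L:ℝ)-1) * lamR D L := by
      have := W1_le_dist_mul hconn hreg hBM hD hL x1 p
      rwa [hx1p] at this
    rw [div_le_iff₀ hD1] at hdual
    have h2 : ((D:ℝ)+1) * (((L:ℝ)-1) * lamR D L) = ((L:ℝ)-1) * (((D:ℝ)+1) - 2*D/L) := by
      rw [show ((D:ℝ)+1) * (((L:ℝ)-1) * lamR D L) = ((L:ℝ)-1) * (((D:ℝ)+1) * lamR D L) by ring,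
        NlamR hD hL]
    nlinarith [hdual, mul_le_mul_of_nonneg_right hup hD1.le]
  -- (4) pointwise lower bound for p-distances on ball x1
  set g : V → ℝ := fun v =>
    ((L:ℝ) - 2) + 2 * (if v = x0 then 1 else 0) + (if G.dist x0 v = 1 then 1 else 0) with hg
  have hpw2 : ∀ v ∈ ball G x1, g v ≤ (G.dist v p : ℝ) := by
    intro v hv
    rw [mem_ball] at hv
    by_cases h0 : v = x0
    · subst h0
      have : (G.dist v p : ℝ) = L := by exact_mod_cast hp
      simp only [hg, if_pos rfl, SimpleGraph.dist_self, this]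
      norm_num
    · by_cases h1 : G.dist x0 v = 1
      · have := sphere1_distp hconn hreg hBM hD hL hp v h1
        simp only [hg, if_neg h0, if_pos h1, this]
        linarith
      · have htri : G.dist x1 p ≤ G.dist x1 v + G.dist v p := hconn.dist_triangle
        have htri' : (G.dist x1 p : ℝ) ≤ (G.dist x1 v : ℝ) + (G.dist v p : ℝ) := by
          exact_mod_cast htri
        have hle : (G.dist x1 v : ℝ) ≤ 1 := by exact_mod_cast hv
        simp only [hg, if_neg h0, if_neg h1]
        rw [hx1p] at htri'
        linarith
  have hgsum : ∑ v ∈ ball G x1, g v = ((L:ℝ) - 2) * ((D:ℝ)+1) + 2 + n1 := by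
    rw [hg]
    rw [Finset.sum_add_distrib, Finset.sum_add_distrib, Finset.sum_const, ← Finset.mul_sum,
      Finset.sum_ite_eq' (ball G x1) x0 (fun _ => (1:ℝ)), Finset.sum_boole]
    rw [if_pos (by rw [mem_ball, SimpleGraph.dist_comm]; omega), card_ball hconn hreg x1]
    push_cast
    ring
  -- (5) all gaps vanish, and n1 is exactly 2D/L - 1
  have hkey : ((L:ℝ) - 2) * ((D:ℝ)+1) + 2 + n1 + ∑ v ∈ ball G x1, ((G.dist v p : ℝ) - g v)
      ≤ (D:ℝ) + ((L:ℝ)-1) * (((D:ℝ)+1) - 2*D/L) := by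
    rw [Finset.sum_sub_distrib, hgsum]
    linarith [hMp_le]
  have hrhs : (D:ℝ) + ((L:ℝ)-1) * (((D:ℝ)+1) - 2*D/L)
      = ((L:ℝ) - 2) * ((D:ℝ)+1) + 2 + (2*D/L - 1) := by
    field_simp
    ring
  have hgaps_nonneg : ∀ v ∈ ball G x1, 0 ≤ (G.dist v p : ℝ) - g v := fun v hv => by
    linarith [hpw2 v hv]
  have hgaps_le : ∑ v ∈ ball G x1, ((G.dist v p : ℝ) - g v) ≤ (2*D/L - 1) - n1 := by
    rw [hrhs] at hkey
    linarith
  have hgaps_zero : ∑ v ∈ ball G x1, ((G.dist v p : ℝ) - g v) = 0 := by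
    have h0 : 0 ≤ ∑ v ∈ ball G x1, ((G.dist v p : ℝ) - g v) := Finset.sum_nonneg hgaps_nonneg
    linarith [hn1_ge]
  have hn1_eq : (n1 : ℝ) = 2 * D / L - 1 := by
    have := hgaps_zero ▸ hgaps_le
    linarith [hn1_ge]
  refine ⟨hn1_eq, by rw [hMx1, hn1_eq]; ring, ?_⟩
  intro v hvle hv2
  have hvball : v ∈ ball G x1 := by rw [mem_ball]; exact hvle
  have hzero := (Finset.sum_eq_zero_iff_of_nonneg hgaps_nonneg).mp hgaps_zero v hvball
  have h0 : v ≠ x0 := fun h => by subst h; rw [SimpleGraph.dist_self] at hv2; omega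
  have h1 : G.dist x0 v ≠ 1 := by omega
  simp only [hg, if_neg h0, if_neg h1] at hzero
  linarith

/-- Every vertex at distance 2 from the pole is at distance exactly `L-2` from `p`. -/
lemma sphere2_distp (hconn : G.Connected) (hreg : G.IsRegularOfDegree D)
    (hBM : BMSharp G D L) (hD : 0 < D) (hL : 0 < L) (hp : G.dist x0 p = L) :
    ∀ v, G.dist x0 v = 2 → (G.dist v p : ℝ) = (L : ℝ) - 2 := by
  intro v hv
  obtain ⟨q, hq⟩ := (hconn.preconnected x0 v).exists_walk_length_eq_dist
  rw [hv] at hq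
  have h01 : G.Adj x0 (q.getVert 1) := by
    have := q.adj_getVert_succ (i := 0) (by omega)
    simpa using this
  have h12adj : G.Adj (q.getVert 1) v := by
    have h := q.adj_getVert_succ (i := 1) (by omega)
    have h2 : q.getVert (1 + 1) = v := by
      have := q.getVert_length
      rw [hq] at this
      exact this
    rwa [h2] at h
  have hw1 : G.dist x0 (q.getVert 1) = 1 := SimpleGraph.dist_eq_one_iff_adj.mpr h01
  have hwv : G.dist (q.getVert 1) v ≤ 1 := le_of_eq (SimpleGraph.dist_eq_one_iff_adj.mpr h12adj)
  exact (sphere1_struct hconn hreg hBM hD hL hp hw1).2.2 v hwv hv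

/-- the x0-distance weight of the ball of a vertex at distance two. -/
lemma Mx_x2_eq (hconn : G.Connected) (hreg : G.IsRegularOfDegree D)
    (hBM : BMSharp G D L) (hD : 0 < D) (hL : 0 < L) (hp : G.dist x0 p = L)
    {x2 : V} (hx2 : G.dist x0 x2 = 2) :
    ∑ v ∈ ball G x2, (G.dist x0 v : ℝ) = 3 * (D:ℝ) + 2 - 4 * D / L := by
  have hL' : (0:ℝ) < L := by exact_mod_cast hL
  have hD1 : (0:ℝ) < (D:ℝ) + 1 := by positivity
  set α : ℕ := ((ball G x2).filter (fun v => G.dist x0 v = 1)).card with hα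
  set β : ℕ := ((ball G x2).filter (fun v => G.dist x0 v = 2)).card with hβ
  have hrange : ∀ v ∈ ball G x2, 1 ≤ G.dist x0 v ∧ G.dist x0 v ≤ 3 := by
    intro v hv
    rw [mem_ball] at hv
    constructor
    · by_contra hc
      have h0 : G.dist x0 v = 0 := by omega
      have hveq : v = x0 := ((hconn.dist_eq_zero_iff).mp h0).symm
      subst hveq
      have hcomm : G.dist x2 v = G.dist v x2 := SimpleGraph.dist_comm
      omega
    · have := hconn.dist_triangle (u := x0) (v := x2) (w := v)
      omega
  have hpw1 : ∀ v ∈ ball G x2, (G.dist x0 v : ℝ)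
      = 3 - 2 * (if G.dist x0 v = 1 then 1 else 0) - (if G.dist x0 v = 2 then 1 else 0) := by
    intro v hv
    obtain ⟨hge, hle⟩ := hrange v hv
    interval_cases h : G.dist x0 v <;> norm_num
  have hMx2 : ∑ v ∈ ball G x2, (G.dist x0 v : ℝ) = 3 * ((D:ℝ)+1) - 2*α - β := by
    rw [Finset.sum_congr rfl hpw1]
    rw [Finset.sum_sub_distrib, Finset.sum_sub_distrib, Finset.sum_const, ← Finset.mul_sum,
      Finset.sum_boole, Finset.sum_boole, card_ball hconn hreg x2]
    push_cast
    ring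
  have hαβ_ge : 1 + 4 * (D:ℝ) / L ≤ 2*(α:ℝ) + β := by
    have hdual := dual_dx hconn hreg x0 x0 x2
    rw [Mx_x0_eq hconn hreg x0, hMx2] at hdual
    have hup : W1 G D x0 x2 ≤ 2 * lamR D L := by
      have := W1_le_dist_mul hconn hreg hBM hD hL x0 x2
      rw [hx2] at this
      exact_mod_cast this
    rw [div_le_iff₀ hD1] at hdual
    have hNl := NlamR hD hL
    have hmul : W1 G D x0 x2 * ((D:ℝ)+1) ≤ 2 * (((D:ℝ)+1) - 2*D/L) := by
      calc W1 G D x0 x2 * ((D:ℝ)+1) ≤ (2 * lamR D L) * ((D:ℝ)+1) :=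
            mul_le_mul_of_nonneg_right hup hD1.le
        _ = 2 * (((D:ℝ)+1) * lamR D L) := by ring
        _ = 2 * (((D:ℝ)+1) - 2*D/L) := by rw [hNl]
    linarith [hdual, hmul, (by ring : 4 * (D:ℝ) / L = 2 * (2 * (D:ℝ) / L))]
  have hx2p : (G.dist x2 p : ℝ) = (L:ℝ) - 2 := sphere2_distp hconn hreg hBM hD hL hp x2 hx2
  have hMp_le : ∑ v ∈ ball G x2, (G.dist v p : ℝ)
      ≤ (D:ℝ) + ((L:ℝ)-2) * (((D:ℝ)+1) - 2*D/L) := by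
    have hdual := dual_dp hconn hreg p x2 p
    rw [Mp_p_eq hconn hreg p] at hdual
    have hup : W1 G D x2 p ≤ ((L:ℝ)-2) * lamR D L := by
      have := W1_le_dist_mul hconn hreg hBM hD hL x2 p
      rwa [hx2p] at this
    rw [div_le_iff₀ hD1] at hdual
    have h2 : ((D:ℝ)+1) * (((L:ℝ)-2) * lamR D L) = ((L:ℝ)-2) * (((D:ℝ)+1) - 2*D/L) := by
      rw [show ((D:ℝ)+1) * (((L:ℝ)-2) * lamR D L) = ((L:ℝ)-2) * (((D:ℝ)+1) * lamR D L) by ring,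
        NlamR hD hL]
    nlinarith [hdual, mul_le_mul_of_nonneg_right hup hD1.le]
  set g : V → ℝ := fun v =>
    ((L:ℝ) - 3) + 2 * (if G.dist x0 v = 1 then 1 else 0) + (if G.dist x0 v = 2 then 1 else 0)
    with hg
  have hpw2 : ∀ v ∈ ball G x2, g v ≤ (G.dist v p : ℝ) := by
    intro v hv
    obtain ⟨hge, hle⟩ := hrange v hv
    rw [mem_ball] at hv
    by_cases h1 : G.dist x0 v = 1
    · have := sphere1_distp hconn hreg hBM hD hL hp v h1
      simp only [hg, if_pos h1, if_neg (by omega : ¬ G.dist x0 v = 2), this]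
      linarith
    · by_cases h2 : G.dist x0 v = 2
      · have := sphere2_distp hconn hreg hBM hD hL hp v h2
        simp only [hg, if_neg h1, if_pos h2, this]
        linarith
      · have htri : G.dist x2 p ≤ G.dist x2 v + G.dist v p := hconn.dist_triangle
        have htri2 : (G.dist x2 p : ℝ) ≤ (G.dist x2 v : ℝ) + (G.dist v p : ℝ) := by
          exact_mod_cast htri
        have hle1 : (G.dist x2 v : ℝ) ≤ 1 := by exact_mod_cast hv
        simp only [hg, if_neg h1, if_neg h2]
        rw [hx2p] at htri2
        linarith
  have hgsum : ∑ v ∈ ball G x2, g v = ((L:ℝ) - 3) * ((D:ℝ)+1) + 2*α + β := by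
    rw [hg]
    rw [Finset.sum_add_distrib, Finset.sum_add_distrib, Finset.sum_const, ← Finset.mul_sum,
      Finset.sum_boole, Finset.sum_boole, card_ball hconn hreg x2]
    push_cast
    ring
  have hαβ_le : 2*(α:ℝ) + β ≤ 1 + 4 * (D:ℝ) / L := by
    have hlow : ∑ v ∈ ball G x2, g v ≤ ∑ v ∈ ball G x2, (G.dist v p : ℝ) :=
      Finset.sum_le_sum hpw2
    rw [hgsum] at hlow
    have hrhs : (D:ℝ) + ((L:ℝ)-2) * (((D:ℝ)+1) - 2*D/L)
        = ((L:ℝ) - 3) * ((D:ℝ)+1) + 1 + 4*D/L := by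
      field_simp
      ring
    linarith [hMp_le]
  have hfin : 2*(α:ℝ) + β = 1 + 4 * (D:ℝ) / L := le_antisymm hαβ_le hαβ_ge
  rw [hMx2]
  linarith [hfin]

/-- splitting the cost of a plan against a potential -/
lemma plan_cost_split (φ : V → ℝ) {y z : V} {π : V → V → ℝ} (hplan : IsPlan G D y z π) :
    ∑ u, ∑ v, (G.dist u v : ℝ) * π u v
      = (∑ u, ∑ v, π u v * ((G.dist u v : ℝ) - φ v + φ u))
        + ((∑ v ∈ ball G z, φ v) - (∑ v ∈ ball G y, φ v)) / ((D:ℝ) + 1) := by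
  obtain ⟨hpos, hrow, hcol⟩ := hplan
  have expand : ∑ u, ∑ v, (φ v - φ u) * π u v
      = (∑ v, φ v * mu G D z v) - (∑ u, φ u * mu G D y u) := by
    have h1 : ∑ u, ∑ v, φ v * π u v = ∑ v, φ v * mu G D z v := by
      rw [Finset.sum_comm]
      exact Finset.sum_congr rfl fun v _ => by rw [← Finset.mul_sum, hcol v, mul_comm]
    have h2 : ∑ u, ∑ v, φ u * π u v = ∑ u, φ u * mu G D y u := by
      exact Finset.sum_congr rfl fun u _ => by rw [← Finset.mul_sum, hrow u]
    calc ∑ u, ∑ v, (φ v - φ u) * π u v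
        = ∑ u, (∑ v, φ v * π u v - ∑ v, φ u * π u v) := by
          exact Finset.sum_congr rfl fun u _ => by
            rw [← Finset.sum_sub_distrib]
            exact Finset.sum_congr rfl fun v _ => by ring
      _ = ∑ u, ∑ v, φ v * π u v - ∑ u, ∑ v, φ u * π u v := Finset.sum_sub_distrib _ _
      _ = _ := by rw [h1, h2]
  rw [sum_mul_mu, sum_mul_mu] at expand
  have split : ∑ u, ∑ v, (G.dist u v : ℝ) * π u v
      = (∑ u, ∑ v, π u v * ((G.dist u v : ℝ) - φ v + φ u))
        + ∑ u, ∑ v, (φ v - φ u) * π u v := by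
    rw [← Finset.sum_add_distrib]
    refine Finset.sum_congr rfl fun u _ => ?_
    rw [← Finset.sum_add_distrib]
    exact Finset.sum_congr rfl fun v _ => by ring
  rw [split, expand, sub_div]

/-- Sums of plan entries over pair sets where the defect is at least 1 are controlled by
the total defect. -/
lemma sum_cols_le {π e : V → V → ℝ} (hπ : ∀ u v, 0 ≤ π u v) (he : ∀ u v, 0 ≤ e u v)
    (W : Finset V) (S : V → Finset V) (h1 : ∀ w ∈ W, ∀ u ∈ S w, 1 ≤ e u w) :
    ∑ w ∈ W, ∑ u ∈ S w, π u w ≤ ∑ u, ∑ v, π u v * e u v := by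
  calc ∑ w ∈ W, ∑ u ∈ S w, π u w
      ≤ ∑ w ∈ W, ∑ u ∈ S w, π u w * e u w := by
        refine Finset.sum_le_sum fun w hw => Finset.sum_le_sum fun u hu => ?_
        exact le_mul_of_one_le_right (hπ u w) (h1 w hw u hu)
    _ ≤ ∑ w ∈ W, ∑ u, π u w * e u w := by
        refine Finset.sum_le_sum fun w _ => ?_
        refine Finset.sum_le_sum_of_subset_of_nonneg (Finset.subset_univ _) fun u _ _ =>
          mul_nonneg (hπ u w) (he u w)
    _ ≤ ∑ w, ∑ u, π u w * e u w := by
        refine Finset.sum_le_sum_of_subset_of_nonneg (Finset.subset_univ _) fun w _ _ =>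
          Finset.sum_nonneg fun u _ => mul_nonneg (hπ u w) (he u w)
    _ = ∑ u, ∑ v, π u v * e u v := Finset.sum_comm

/-- single-column defect bound with pointwise hypotheses. -/
lemma col_defect_le {π e : V → V → ℝ} (hπ : ∀ u v, 0 ≤ π u v) (he : ∀ u v, 0 ≤ e u v)
    (w : V) (T : Finset V) (hT : ∀ u ∈ T, π u w ≤ π u w * e u w) :
    ∑ u ∈ T, π u w ≤ ∑ u, ∑ v, π u v * e u v := by
  calc ∑ u ∈ T, π u w ≤ ∑ u ∈ T, π u w * e u w := Finset.sum_le_sum hT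
    _ ≤ ∑ u, π u w * e u w :=
        Finset.sum_le_sum_of_subset_of_nonneg (Finset.subset_univ _) fun u _ _ =>
          mul_nonneg (hπ u w) (he u w)
    _ ≤ ∑ u, ∑ v, π u v * e u v := by
        refine Finset.sum_le_sum fun u _ => ?_
        exact Finset.single_le_sum (f := fun v => π u v * e u v)
          (fun v _ => mul_nonneg (hπ u v) (he u v)) (mem_univ w)

end Sphere

end Aux

theorem stmt [Fintype V] (G : SimpleGraph V) (hconn : G.Connected)
    (D L : ℕ) (hD : 0 < D) (hL : 0 < L) (hreg : G.IsRegularOfDegree D)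
    (hdiam : G.diam = L) (hBM : BMSharp G D L)
    (x0 : V) (hpole : ∃ p, G.dist x0 p = L)
    (x1 x2 : V) (hx1 : G.dist x0 x1 = 1) (hx2 : G.dist x0 x2 = 2)
    (h12 : G.Adj x1 x2) :
    ∃! w : V, G.dist x0 w = 1 ∧ G.Adj w x2 ∧ w ≠ x1 ∧ ¬ G.Adj w x1 := by
  classical
  obtain ⟨p, hp⟩ := hpole
  have hD1 : (0:ℝ) < (D:ℝ) + 1 := by positivity
  have hL' : (0:ℝ) < (L:ℝ) := by exact_mod_cast hL
  have hNl := NlamR (D := D) (L := L) hD hL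
  have hlamdiv : (((D:ℝ)+1) - 2*D/L) / ((D:ℝ)+1) = lamR D L := by
    rw [div_eq_iff hD1.ne']
    rw [← hNl]
    ring
  have hMx0 := Mx_x0_eq hconn hreg x0
  obtain ⟨hn1, hMx1, hS2⟩ := sphere1_struct hconn hreg hBM hD hL hp hx1
  have hMx2 := Mx_x2_eq hconn hreg hBM hD hL hp hx2
  -- W1 equalities on the two radial edges
  have hW12 : W1 G D x1 x2 = lamR D L := by
    have hle := W1_le_lam hBM hD hL h12
    have hge := dual_dx hconn hreg x0 x1 x2
    rw [hMx1, hMx2] at hge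
    rw [show (3*(D:ℝ) + 2 - 4*D/L - (2*(D:ℝ) + 1 - 2*D/L)) = ((D:ℝ)+1) - 2*D/L by ring,
      hlamdiv] at hge
    linarith
  have hW01 : W1 G D x0 x1 = lamR D L := by
    have hle := W1_le_lam hBM hD hL (SimpleGraph.dist_eq_one_iff_adj.mp hx1)
    have hge := dual_dx hconn hreg x0 x0 x1
    rw [hMx0, hMx1] at hge
    rw [show (2*(D:ℝ) + 1 - 2*D/L - (D:ℝ)) = ((D:ℝ)+1) - 2*D/L by ring, hlamdiv] at hge
    linarith
  have hd_x1x0 : G.dist x1 x0 = 1 := by rw [SimpleGraph.dist_comm]; exact hx1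
  have hd_x1x2 : G.dist x1 x2 = 1 := SimpleGraph.dist_eq_one_iff_adj.mpr h12
  set ε : ℝ := 1 / (4 * ((D:ℝ)+1)) with hεdef
  have hε : 0 < ε := by positivity
  have he_nonneg : ∀ u v : V,
      0 ≤ (G.dist u v : ℝ) - (G.dist x0 v : ℝ) + (G.dist x0 u : ℝ) := by
    intro u v
    have := lips_dist_right hconn x0 u v
    linarith
  have he_one : ∀ u v : V, u ≠ x0 → u ≠ v → G.dist x0 v = 1 →
      1 ≤ (G.dist u v : ℝ) - (G.dist x0 v : ℝ) + (G.dist x0 u : ℝ) := by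
    intro u v hux0 huv hv1
    have h1 : 1 ≤ G.dist u v := by
      rcases Nat.eq_zero_or_pos (G.dist u v) with h | h
      · exact absurd ((hconn.dist_eq_zero_iff).mp h) huv
      · omega
    have h2 : 1 ≤ G.dist x0 u := by
      rcases Nat.eq_zero_or_pos (G.dist x0 u) with h | h
      · exact absurd ((hconn.dist_eq_zero_iff).mp h).symm hux0
      · omega
    have c1 : (1:ℝ) ≤ (G.dist u v : ℝ) := by exact_mod_cast h1
    have c2 : (1:ℝ) ≤ (G.dist x0 u : ℝ) := by exact_mod_cast h2
    have c3 : (G.dist x0 v : ℝ) = 1 := by exact_mod_cast hv1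
    linarith
  -- a near-optimal plan for (x1, x2)
  obtain ⟨c, hcmem, hclt⟩ := Real.lt_sInf_add_pos (costSet_nonempty hconn hreg x1 x2) hε
  obtain ⟨π, hπpos, hπrow, hπcol, rfl⟩ := hcmem
  have hπplan : IsPlan G D x1 x2 π := ⟨hπpos, hπrow, hπcol⟩
  have hsplit := plan_cost_split (fun v => (G.dist x0 v : ℝ)) hπplan
  rw [hMx1, hMx2] at hsplit
  rw [show (3*(D:ℝ) + 2 - 4*D/L - (2*(D:ℝ) + 1 - 2*D/L)) = ((D:ℝ)+1) - 2*D/L by ring,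
    hlamdiv] at hsplit
  rw [← W1_eq_csInf, hW12] at hclt
  have hBadlt : ∑ u, ∑ v, π u v *
      ((G.dist u v : ℝ) - (G.dist x0 v : ℝ) + (G.dist x0 u : ℝ)) < ε := by
    linarith [hsplit, hclt]
  have hBadpos : 0 ≤ ∑ u, ∑ v, π u v *
      ((G.dist u v : ℝ) - (G.dist x0 v : ℝ) + (G.dist x0 u : ℝ)) :=
    Finset.sum_nonneg fun u _ => Finset.sum_nonneg fun v _ =>
      mul_nonneg (hπpos u v) (he_nonneg u v)
  -- key estimate: any valid w captures the full x0-row mass of the plan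
  have hkey : ∀ w : V, G.dist x0 w = 1 → G.Adj w x2 → w ≠ x1 → ¬ G.Adj w x1 →
      1/((D:ℝ)+1) - (∑ u, ∑ v, π u v *
        ((G.dist u v : ℝ) - (G.dist x0 v : ℝ) + (G.dist x0 u : ℝ))) ≤ π x0 w := by
    intro w hw1 hwx2 hwx1 hwadj
    have hwx0 : w ≠ x0 := by
      intro h; subst h; rw [SimpleGraph.dist_self] at hw1; omega
    have hcolw : ∑ u, π u w = 1/((D:ℝ)+1) := by
      rw [hπcol w, mu_eq_of_le (G := G) x2 w (SimpleGraph.dist_eq_one_iff_adj.mpr hwx2.symm).le]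
    have hsplit1 : π x0 w + ∑ u ∈ univ.erase x0, π u w = ∑ u, π u w :=
      Finset.add_sum_erase univ (fun u => π u w) (mem_univ x0)
    have hwmem : w ∈ univ.erase x0 := by
      rw [Finset.mem_erase]; exact ⟨hwx0, mem_univ w⟩
    have hsplit2 : π w w + ∑ u ∈ (univ.erase x0).erase w, π u w = ∑ u ∈ univ.erase x0, π u w :=
      Finset.add_sum_erase (univ.erase x0) (fun u => π u w) hwmem
    have hπww : π w w ≤ 0 := by
      have hle : π w w ≤ ∑ v, π w v :=
        Finset.single_le_sum (f := fun v => π w v) (fun v _ => hπpos w v) (mem_univ w)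
      rw [hπrow w, mu_eq_zero (G := G) x1 w ?_] at hle
      · exact hle
      · intro hcon
        rcases Nat.le_one_iff_eq_zero_or_eq_one.mp hcon with h | h
        · exact hwx1 ((hconn.dist_eq_zero_iff).mp h).symm
        · exact hwadj (SimpleGraph.dist_eq_one_iff_adj.mp h).symm
    have hrest : ∑ u ∈ (univ.erase x0).erase w, π u w
        ≤ ∑ u, ∑ v, π u v *
          ((G.dist u v : ℝ) - (G.dist x0 v : ℝ) + (G.dist x0 u : ℝ)) := by
      have h := sum_cols_le (π := π)
        (e := fun u v => (G.dist u v : ℝ) - (G.dist x0 v : ℝ) + (G.dist x0 u : ℝ))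
        hπpos he_nonneg {w} (fun _ => (univ.erase x0).erase w) ?_
      · simpa using h
      · intro w' hw' u hu
        rw [Finset.mem_singleton] at hw'
        subst hw'
        rw [Finset.mem_erase, Finset.mem_erase] at hu
        exact he_one u w' hu.2.1 hu.1 hw1
    linarith [hcolw, hsplit1, hsplit2, hπww, hrest]
  have hεq : 4 * ε = 1/((D:ℝ)+1) := by
    rw [hεdef]; field_simp
  have huniq : ∀ w w' : V, (G.dist x0 w = 1 ∧ G.Adj w x2 ∧ w ≠ x1 ∧ ¬ G.Adj w x1) →
      (G.dist x0 w' = 1 ∧ G.Adj w' x2 ∧ w' ≠ x1 ∧ ¬ G.Adj w' x1) → w = w' := by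
    intro w w' hw hw'
    by_contra hne
    have hb1 := hkey w hw.1 hw.2.1 hw.2.2.1 hw.2.2.2
    have hb2 := hkey w' hw'.1 hw'.2.1 hw'.2.2.1 hw'.2.2.2
    have hrow0 : ∑ v, π x0 v = 1/((D:ℝ)+1) := by
      rw [hπrow x0, mu_eq_of_le (G := G) x1 x0 (le_of_eq hd_x1x0)]
    have hpair : π x0 w + π x0 w' ≤ ∑ v, π x0 v := by
      rw [← Finset.sum_pair hne]
      exact Finset.sum_le_sum_of_subset_of_nonneg (Finset.subset_univ _) fun v _ _ => hπpos x0 v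
    have hNpos : 0 < 1/((D:ℝ)+1) := by positivity
    linarith [hb1, hb2, hpair, hrow0, hBadlt, hεq, hNpos]
  -- a near-optimal plan for (x0, x1)
  obtain ⟨c', hcmem', hclt'⟩ := Real.lt_sInf_add_pos (costSet_nonempty hconn hreg x0 x1) hε
  obtain ⟨σ, hσpos, hσrow, hσcol, rfl⟩ := hcmem'
  have hσplan : IsPlan G D x0 x1 σ := ⟨hσpos, hσrow, hσcol⟩
  have hsplit' := plan_cost_split (fun v => (G.dist x0 v : ℝ)) hσplan
  rw [hMx0, hMx1] at hsplit'
  rw [show (2*(D:ℝ) + 1 - 2*D/L - (D:ℝ)) = ((D:ℝ)+1) - 2*D/L by ring, hlamdiv] at hsplit'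
  rw [← W1_eq_csInf, hW01] at hclt'
  have hBlt : ∑ u, ∑ v, σ u v *
      ((G.dist u v : ℝ) - (G.dist x0 v : ℝ) + (G.dist x0 u : ℝ)) < ε := by
    linarith [hsplit', hclt']
  have hBpos : 0 ≤ ∑ u, ∑ v, σ u v *
      ((G.dist u v : ℝ) - (G.dist x0 v : ℝ) + (G.dist x0 u : ℝ)) :=
    Finset.sum_nonneg fun u _ => Finset.sum_nonneg fun v _ =>
      mul_nonneg (hσpos u v) (he_nonneg u v)
  have hex : ∃ w : V, G.dist x0 w = 1 ∧ G.Adj w x2 ∧ w ≠ x1 ∧ ¬ G.Adj w x1 := by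
    by_contra hno
    push_neg at hno
    have hball : ∀ u : V, G.dist x0 u = 1 → G.Adj u x2 → G.dist x1 u ≤ 1 := by
      intro u h1 h2
      by_cases hux1 : u = x1
      · subst hux1; rw [SimpleGraph.dist_self]; omega
      · exact (SimpleGraph.dist_eq_one_iff_adj.mpr (hno u h1 h2 hux1).symm).le
    -- column x0: the mass at x0 stays
    have hcol0 : ∑ u, σ u x0 = 1/((D:ℝ)+1) := by
      rw [hσcol x0, mu_eq_of_le (G := G) x1 x0 (le_of_eq hd_x1x0)]
    have hs1 : σ x0 x0 + ∑ u ∈ univ.erase x0, σ u x0 = ∑ u, σ u x0 :=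
      Finset.add_sum_erase univ (fun u => σ u x0) (mem_univ x0)
    have hrest0 : ∑ u ∈ univ.erase x0, σ u x0
        ≤ ∑ u, ∑ v, σ u v * ((G.dist u v : ℝ) - (G.dist x0 v : ℝ) + (G.dist x0 u : ℝ)) := by
      apply col_defect_le hσpos he_nonneg x0
      intro u hu
      rw [Finset.mem_erase] at hu
      refine le_mul_of_one_le_right (hσpos u x0) ?_
      have h1 : 1 ≤ G.dist u x0 := by
        rcases Nat.eq_zero_or_pos (G.dist u x0) with h | h
        · exact absurd ((hconn.dist_eq_zero_iff).mp h) hu.1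
        · omega
      have h2 : 1 ≤ G.dist x0 u := by
        rcases Nat.eq_zero_or_pos (G.dist x0 u) with h | h
        · exact absurd ((hconn.dist_eq_zero_iff).mp h).symm hu.1
        · omega
      have c1 : (1:ℝ) ≤ (G.dist u x0 : ℝ) := by exact_mod_cast h1
      have c2 : (1:ℝ) ≤ (G.dist x0 u : ℝ) := by exact_mod_cast h2
      have c3 : (G.dist x0 x0 : ℝ) = 0 := by rw [SimpleGraph.dist_self]; norm_num
      linarith
    have hσ00 : 1/((D:ℝ)+1) -
        (∑ u, ∑ v, σ u v * ((G.dist u v : ℝ) - (G.dist x0 v : ℝ) + (G.dist x0 u : ℝ)))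
        ≤ σ x0 x0 := by
      linarith [hcol0, hs1, hrest0]
    -- row x0 leftover
    have hrow0 : ∑ v, σ x0 v = 1/((D:ℝ)+1) := by
      rw [hσrow x0, mu_eq_of_le (G := G) x0 x0 (by rw [SimpleGraph.dist_self]; omega)]
    have hs2 : σ x0 x0 + ∑ v ∈ univ.erase x0, σ x0 v = ∑ v, σ x0 v :=
      Finset.add_sum_erase univ (fun v => σ x0 v) (mem_univ x0)
    have hleft : ∑ v ∈ univ.erase x0, σ x0 v
        ≤ ∑ u, ∑ v, σ u v * ((G.dist u v : ℝ) - (G.dist x0 v : ℝ) + (G.dist x0 u : ℝ)) := by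
      linarith [hrow0, hs2, hσ00]
    -- column x2 decomposition
    have hcolx2 : ∑ u, σ u x2 = 1/((D:ℝ)+1) := by
      rw [hσcol x2, mu_eq_of_le (G := G) x1 x2 (le_of_eq hd_x1x2)]
    have hsplitx2 :
        ∑ u ∈ univ.filter (fun u => G.dist x0 u = 1 ∧ G.Adj u x2), σ u x2
          + ∑ u ∈ univ.filter (fun u => ¬(G.dist x0 u = 1 ∧ G.Adj u x2)), σ u x2
        = ∑ u, σ u x2 :=
      Finset.sum_filter_add_sum_filter_not univ _ _
    have hx0nm : x0 ∈ univ.filter (fun u => ¬(G.dist x0 u = 1 ∧ G.Adj u x2)) := by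
      simp [SimpleGraph.dist_self]
    have hs3 : σ x0 x2
        + ∑ u ∈ (univ.filter (fun u => ¬(G.dist x0 u = 1 ∧ G.Adj u x2))).erase x0, σ u x2
        = ∑ u ∈ univ.filter (fun u => ¬(G.dist x0 u = 1 ∧ G.Adj u x2)), σ u x2 :=
      Finset.add_sum_erase _ (fun u => σ u x2) hx0nm
    have hrem : ∑ u ∈ (univ.filter (fun u => ¬(G.dist x0 u = 1 ∧ G.Adj u x2))).erase x0, σ u x2
        ≤ ∑ u, ∑ v, σ u v * ((G.dist u v : ℝ) - (G.dist x0 v : ℝ) + (G.dist x0 u : ℝ)) := by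
      apply col_defect_le hσpos he_nonneg x2
      intro u hu
      rw [Finset.mem_erase, Finset.mem_filter] at hu
      obtain ⟨hux0, -, hnP⟩ := hu
      by_cases h1 : G.dist x0 u = 1
      · have hnadj : ¬ G.Adj u x2 := fun h => hnP ⟨h1, h⟩
        refine le_mul_of_one_le_right (hσpos u x2) ?_
        have hd2 : 2 ≤ G.dist u x2 := by
          have hne : u ≠ x2 := by intro h; subst h; omega
          have h0 : G.dist u x2 ≠ 0 := fun h => hne ((hconn.dist_eq_zero_iff).mp h)
          have h1' : G.dist u x2 ≠ 1 := fun h => hnadj (SimpleGraph.dist_eq_one_iff_adj.mp h)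
          omega
        have c1 : (2:ℝ) ≤ (G.dist u x2:ℝ) := by exact_mod_cast hd2
        have c2 : (G.dist x0 x2 : ℝ) = 2 := by exact_mod_cast hx2
        have c3 : (G.dist x0 u : ℝ) = 1 := by exact_mod_cast h1
        linarith
      · have hσu0 : σ u x2 = 0 := by
          have hle : σ u x2 ≤ ∑ v, σ u v :=
            Finset.single_le_sum (f := fun v => σ u v) (fun v _ => hσpos u v) (mem_univ x2)
          rw [hσrow u, mu_eq_zero (G := G) x0 u ?_] at hle
          · exact le_antisymm hle (hσpos u x2)
          · intro hcon
            rcases Nat.le_one_iff_eq_zero_or_eq_one.mp hcon with h | h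
            · exact hux0 ((hconn.dist_eq_zero_iff).mp h).symm
            · exact h1 h
        rw [hσu0, zero_mul]
    -- per-u bound on the adjacent sphere-one vertices
    have huSadj : ∀ u ∈ univ.filter (fun u => G.dist x0 u = 1 ∧ G.Adj u x2),
        σ u x2 ≤ σ x0 u + ∑ u' ∈ (univ.erase x0).erase u, σ u' u := by
      intro u hu
      rw [Finset.mem_filter] at hu
      obtain ⟨-, h1, h2⟩ := hu
      have hux2 : u ≠ x2 := by intro h; subst h; omega
      have hux0 : u ≠ x0 := by
        intro h; subst h; rw [SimpleGraph.dist_self] at h1; omega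
      have hcolu : ∑ u', σ u' u = 1/((D:ℝ)+1) := by
        rw [hσcol u, mu_eq_of_le (G := G) x1 u (hball u h1 h2)]
      have ht1 : σ x0 u + ∑ u' ∈ univ.erase x0, σ u' u = ∑ u', σ u' u :=
        Finset.add_sum_erase univ (fun u' => σ u' u) (mem_univ x0)
      have humem : u ∈ univ.erase x0 := by rw [Finset.mem_erase]; exact ⟨hux0, mem_univ u⟩
      have ht2 : σ u u + ∑ u' ∈ (univ.erase x0).erase u, σ u' u = ∑ u' ∈ univ.erase x0, σ u' u :=
        Finset.add_sum_erase (univ.erase x0) (fun u' => σ u' u) humem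
      have hrowu : ∑ v, σ u v = 1/((D:ℝ)+1) := by
        rw [hσrow u, mu_eq_of_le (G := G) x0 u (le_of_eq h1)]
      have hpair : σ u x2 + σ u u ≤ ∑ v, σ u v := by
        have e : ∑ v ∈ ({x2, u} : Finset V), σ u v = σ u x2 + σ u u :=
          Finset.sum_pair (Ne.symm hux2)
        rw [← e]
        exact Finset.sum_le_sum_of_subset_of_nonneg (Finset.subset_univ _)
          fun v _ _ => hσpos u v
      linarith [hcolu, ht1, ht2, hrowu, hpair]
    have hSadjsum : ∑ u ∈ univ.filter (fun u => G.dist x0 u = 1 ∧ G.Adj u x2), σ u x2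
        ≤ (∑ u ∈ univ.filter (fun u => G.dist x0 u = 1 ∧ G.Adj u x2), σ x0 u)
          + ∑ u ∈ univ.filter (fun u => G.dist x0 u = 1 ∧ G.Adj u x2),
              ∑ u' ∈ (univ.erase x0).erase u, σ u' u := by
      rw [← Finset.sum_add_distrib]
      exact Finset.sum_le_sum huSadj
    have hbadcols : ∑ u ∈ univ.filter (fun u => G.dist x0 u = 1 ∧ G.Adj u x2),
        ∑ u' ∈ (univ.erase x0).erase u, σ u' u
        ≤ ∑ u, ∑ v, σ u v * ((G.dist u v : ℝ) - (G.dist x0 v : ℝ) + (G.dist x0 u : ℝ)) := by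
      apply sum_cols_le hσpos he_nonneg
      intro w hw u' hu'
      rw [Finset.mem_filter] at hw
      rw [Finset.mem_erase, Finset.mem_erase] at hu'
      exact he_one u' w hu'.2.1 hu'.1 hw.2.1
    have hx0terms : σ x0 x2 + ∑ u ∈ univ.filter (fun u => G.dist x0 u = 1 ∧ G.Adj u x2), σ x0 u
        ≤ ∑ v ∈ univ.erase x0, σ x0 v := by
      have hx2notin : x2 ∉ univ.filter (fun u => G.dist x0 u = 1 ∧ G.Adj u x2) := by
        rw [Finset.mem_filter]
        rintro ⟨-, h1, -⟩
        omega
      have e : ∑ u ∈ insert x2 (univ.filter (fun u => G.dist x0 u = 1 ∧ G.Adj u x2)), σ x0 u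
          = σ x0 x2 + ∑ u ∈ univ.filter (fun u => G.dist x0 u = 1 ∧ G.Adj u x2), σ x0 u :=
        Finset.sum_insert hx2notin
      rw [← e]
      refine Finset.sum_le_sum_of_subset_of_nonneg ?_ fun v _ _ => hσpos x0 v
      intro v hv
      rw [Finset.mem_insert, Finset.mem_filter] at hv
      rw [Finset.mem_erase]
      refine ⟨?_, mem_univ v⟩
      rcases hv with rfl | ⟨-, h1, -⟩
      · intro h
        rw [h, SimpleGraph.dist_self] at hx2
        omega
      · intro h; subst h; rw [SimpleGraph.dist_self] at h1; omega
    have hNpos : 0 < 1/((D:ℝ)+1) := by positivity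
    linarith [hcolx2, hsplitx2, hs3, hrem, hSadjsum, hbadcols, hx0terms, hleft, hBlt, hεq,
      hNpos]
  obtain ⟨w, hw⟩ := hex
  exact ⟨w, hw, fun y hy => huniq y w hy hw⟩


end BMS
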